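/- Let q = 3^m with m odd, F_q the finite field with q elements, and let a ∈ F_q with a ∉ F_3 (i.e., a ≠ 0, 1, -1). Then the polynomial H(x) = x^3 + (a+1)x^2 + ((2a^4 + 2a^3)/(a^2 + a + 1))x + ((2a^5 + a^4)/(a^2 + a + 1)) has exactly one root in F_q. -/

import Mathlib

lemma cubicAS {F : Type*} [Field F] [Fintype F] (h3 : (3:F) = 0) (A B : F)
    (hA : ∀ d : F, d * d ≠ -A) : ∃! w : F, w ^ 3 + A * w + B = 0 := by
  have hinj : Function.Injective (fun w : F => w ^ 3 + A * w) := by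
    intro u v huv
    simp only at huv
    by_contra hne
    have hd : u - v ≠ 0 := sub_ne_zero.mpr hne
    have hfac : (u - v) * ((u - v) * (u - v) + A) = 0 := by
      linear_combination huv - u * v * (u - v) * h3
    rcases mul_eq_zero.mp hfac with h | h
    · exact hd h
    · exact hA (u - v) (by linear_combination h)
  obtain ⟨w, hw⟩ := Finite.injective_iff_surjective.mp hinj (-B)
  simp only at hw
  refine ⟨w, by linear_combination hw, fun y hy => ?_⟩
  exact hinj (by simp only; linear_combination hy - (by linear_combination hw : w ^ 3 + A * w + B = 0))

theorem stmt_10 (m : ℕ) (hm : 0 < m) (hodd : Odd m)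
    (F : Type*) [Field F] [Fintype F] (hF : Fintype.card F = 3 ^ m)
    (a : F) (h0 : a ≠ 0) (h1 : a ≠ 1) (h2 : a ≠ -1) :
    ∃! x : F, x ^ 3 + (a + 1) * x ^ 2
      + ((2 * a ^ 4 + 2 * a ^ 3) / (a ^ 2 + a + 1)) * x
      + (2 * a ^ 5 + a ^ 4) / (a ^ 2 + a + 1) = 0 := by
  -- characteristic 3
  have h3 : (3:F) = 0 := by
    have hc := FiniteField.cast_card_eq_zero F
    rw [hF] at hc
    push_cast at hc
    exact pow_eq_zero_iff hm.ne' |>.mp hc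
  -- -1 is not a square
  have hcard4 : Fintype.card F % 4 = 3 := by
    rw [hF]
    obtain ⟨k, rfl⟩ := hodd
    have h9 : 9 ^ k % 4 = 1 := by
      rw [Nat.pow_mod]; norm_num
    calc 3 ^ (2 * k + 1) % 4 = 9 ^ k * 3 % 4 := by
          rw [pow_succ, pow_mul]; norm_num
      _ = (9 ^ k % 4) * (3 % 4) % 4 := by rw [Nat.mul_mod]
      _ = 3 := by rw [h9]
  have hns : ¬ IsSquare (-1 : F) := by
    rw [FiniteField.isSquare_neg_one_iff]
    omega
  -- nonzero elements
  have ha1 : a - 1 ≠ 0 := sub_ne_zero.mpr h1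
  have ha2 : a + 1 ≠ 0 := by intro h; exact h2 (by linear_combination h)
  have hK : a ^ 2 + a + 1 = (a - 1) ^ 2 := by linear_combination a * h3
  have hKne : a ^ 2 + a + 1 ≠ 0 := by rw [hK]; exact pow_ne_zero 2 ha1
  set K : F := a ^ 2 + a + 1 with hKdef
  -- constants for the Artin–Schreier form
  set A : F := K / a ^ 4 with hAdef
  set B : F := 1 / (a ^ 4 * (a + 1)) with hBdef
  have ha4 : (a:F) ^ 4 ≠ 0 := pow_ne_zero 4 h0
  -- -A is a nonsquare
  have hAns : ∀ d : F, d * d ≠ -A := by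
    intro d hd
    apply hns
    rw [hAdef, hK] at hd
    have hd' : d * d * a ^ 4 = -(a - 1) ^ 2 := by
      field_simp at hd
      linear_combination hd
    refine ⟨d * a ^ 2 / (a - 1), ?_⟩
    rw [eq_comm, div_mul_div_comm, div_eq_iff (mul_ne_zero ha1 ha1)]
    linear_combination hd'
  obtain ⟨w, hw, hwu⟩ := cubicAS h3 A B hAns
  have hw0 : w ≠ 0 := by
    intro h
    rw [h] at hw
    have : B = 0 := by linear_combination hw
    rw [hBdef] at this
    field_simp at this
    simp at this
  -- key identity (char 3): K^3 * H(x) = G(K*x - 2*a^3) where G z = z^3 + (a+1)*K*z^2 + a^4*(a+1)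
  have KI : ∀ x : F, K ^ 3 * (x ^ 3 + (a + 1) * x ^ 2)
      + K ^ 2 * ((2 * a ^ 4 + 2 * a ^ 3) * x + (2 * a ^ 5 + a ^ 4))
      = (K * x - 2 * a ^ 3) ^ 3 + (a + 1) * K * (K * x - 2 * a ^ 3) ^ 2 + a ^ 4 * (a + 1) := by
    intro x
    rw [hKdef]
    linear_combination ((2:F)*a^3*x^1 + (2:F)*a^3*x^2 + (6:F)*a^4*x^1 + (4:F)*a^4*x^2 + (1:F)*a^5 + (10:F)*a^5*x^1 + (6:F)*a^5*x^2 + (1:F)*a^6 + (6:F)*a^6*x^1 + (4:F)*a^6*x^2 + (2:F)*a^7*x^1 + (2:F)*a^7*x^2 + (-1:F)*a^8 + (-2:F)*a^8*x^1 + (2:F)*a^9) * h3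
  -- H(x) = 0 ↔ G(K*x - 2*a^3) = 0
  have Hbridge : ∀ x : F, (x ^ 3 + (a + 1) * x ^ 2
      + ((2 * a ^ 4 + 2 * a ^ 3) / K) * x
      + (2 * a ^ 5 + a ^ 4) / K = 0)
      ↔ ((K * x - 2 * a ^ 3) ^ 3 + (a + 1) * K * (K * x - 2 * a ^ 3) ^ 2 + a ^ 4 * (a + 1) = 0) := by
    intro x
    rw [← KI x]
    constructor
    · intro h
      have h' : K ^ 3 * (x ^ 3 + (a + 1) * x ^ 2
          + ((2 * a ^ 4 + 2 * a ^ 3) / K) * x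
          + (2 * a ^ 5 + a ^ 4) / K) = 0 := by rw [h, mul_zero]
      calc K ^ 3 * (x ^ 3 + (a + 1) * x ^ 2)
            + K ^ 2 * ((2 * a ^ 4 + 2 * a ^ 3) * x + (2 * a ^ 5 + a ^ 4))
          = K ^ 3 * (x ^ 3 + (a + 1) * x ^ 2
            + ((2 * a ^ 4 + 2 * a ^ 3) / K) * x + (2 * a ^ 5 + a ^ 4) / K) := by
            field_simp; ring
        _ = 0 := h'
    · intro h
      have h' : K ^ 3 * (x ^ 3 + (a + 1) * x ^ 2
          + ((2 * a ^ 4 + 2 * a ^ 3) / K) * x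
          + (2 * a ^ 5 + a ^ 4) / K) = 0 := by
        calc K ^ 3 * (x ^ 3 + (a + 1) * x ^ 2
            + ((2 * a ^ 4 + 2 * a ^ 3) / K) * x + (2 * a ^ 5 + a ^ 4) / K)
            = K ^ 3 * (x ^ 3 + (a + 1) * x ^ 2)
              + K ^ 2 * ((2 * a ^ 4 + 2 * a ^ 3) * x + (2 * a ^ 5 + a ^ 4)) := by
              field_simp; ring
          _ = 0 := h
      rcases mul_eq_zero.mp h' with hc | hc
      · exact absurd hc (pow_ne_zero 3 hKne)
      · exact hc
  -- G(z) = 0 with z ≠ 0 ↔ AS equation for z⁻¹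
  have Gbridge : ∀ z : F, z ≠ 0 →
      (z ^ 3 + (a + 1) * K * z ^ 2 + a ^ 4 * (a + 1) = 0
        ↔ (z⁻¹) ^ 3 + A * z⁻¹ + B = 0) := by
    intro z hz
    have hscale : z ^ 3 + (a + 1) * K * z ^ 2 + a ^ 4 * (a + 1)
        = a ^ 4 * (a + 1) * z ^ 3 * ((z⁻¹) ^ 3 + A * z⁻¹ + B) := by
      rw [hAdef, hBdef]
      field_simp
      ring
    rw [hscale]
    constructor
    · intro h
      rcases mul_eq_zero.mp h with hc | hc
      · exact absurd hc (by
          intro hc'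
          rcases mul_eq_zero.mp hc' with hc2 | hc2
          · rcases mul_eq_zero.mp hc2 with hc3 | hc3
            · exact ha4 hc3
            · exact ha2 hc3
          · exact pow_ne_zero 3 hz hc2)
      · exact hc
    · intro h; rw [h, mul_zero]
  -- conclude
  have hG0 : ∀ z : F, z ^ 3 + (a + 1) * K * z ^ 2 + a ^ 4 * (a + 1) = 0 → z ≠ 0 := by
    intro z hz h0z
    rw [h0z] at hz
    simp at hz
    rcases hz with hc | hc
    · exact h0 hc
    · exact ha2 (by linear_combination hc)
  -- the unique root
  refine ⟨(w⁻¹ + 2 * a ^ 3) / K, ?_, ?_⟩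
  · refine (Hbridge _).mpr ?_
    have hz : K * ((w⁻¹ + 2 * a ^ 3) / K) - 2 * a ^ 3 = w⁻¹ := by field_simp; ring
    rw [hz]
    rw [Gbridge w⁻¹ (inv_ne_zero hw0)]
    rw [inv_inv]
    exact hw
  · intro x hx
    replace hx := (Hbridge x).mp hx
    set z : F := K * x - 2 * a ^ 3 with hzdef
    have hzne : z ≠ 0 := hG0 z hx
    have hAS : (z⁻¹) ^ 3 + A * z⁻¹ + B = 0 := (Gbridge z hzne).mp hx
    have : z⁻¹ = w := hwu z⁻¹ hAS
    have hzw : z = w⁻¹ := by rw [← this, inv_inv]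
    rw [hzdef] at hzw
    rw [eq_div_iff hKne]
    linear_combination hzw
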